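/- For all positive integers k and t and every real 0 < γ ≤ 1 there exists γ′ > 0 such that for all sufficiently large n the following holds: if T is a set of ordered t-tuples of distinct elements of {1,…,n} with |T| > γ·n^t, then choosing t independent uniformly random k-subsets A₁,…,A_t of {1,…,n}, with probability at least γ′ the sets A₁,…,A_t are pairwise disjoint and the tuple (A₁,…,A_t) is T-complete. -/

import Mathlib

open Finset

open scoped Classical

/-- Power mean inequality in ℕ, multiplied out. -/
lemma natPM {β : Type*} (s : Finset β) (f : β → ℕ) (m : ℕ) :
    (∑ i ∈ s, f i) ^ m * s.card ≤ s.card ^ m * ∑ i ∈ s, f i ^ m := by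
  cases m with
  | zero => simp
  | succ m =>
    have h := pow_sum_le_card_mul_sum_pow (s := s) (f := fun i => (f i : ℝ))
      (fun i _ => by positivity) m
    have h2 := mul_le_mul_of_nonneg_right h (show (0:ℝ) ≤ s.card by positivity)
    have h3 : ((∑ i ∈ s, f i : ℕ) : ℝ) ^ (m+1) * (s.card : ℝ) ≤
        (s.card : ℝ) ^ (m+1) * ((∑ i ∈ s, f i ^ (m+1) : ℕ) : ℝ) := by
      push_cast
      calc (∑ i ∈ s, (f i:ℝ))^(m+1) * (s.card:ℝ)
          ≤ ((s.card:ℝ)^m * ∑ i ∈ s, (f i:ℝ)^(m+1)) * (s.card:ℝ) := h2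
        _ = (s.card:ℝ)^(m+1) * ∑ i ∈ s, (f i:ℝ)^(m+1) := by ring
    exact_mod_cast h3

/-- Filter of `univ` with a fixed classical decidability instance. -/
noncomputable def cfilter {α : Type*} [Fintype α] (p : α → Prop) : Finset α :=
  @Finset.filter _ p (Classical.decPred p) Finset.univ

lemma mem_cfilter {α : Type*} [Fintype α] {p : α → Prop} {a : α} :
    a ∈ cfilter p ↔ p a := by
  unfold cfilter
  rw [Finset.mem_filter]
  simp

lemma cfilter_congr {α : Type*} [Fintype α] {p q : α → Prop} (h : ∀ a, p a ↔ q a) :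
    cfilter p = cfilter q := by
  ext a; rw [mem_cfilter, mem_cfilter]; exact h a

lemma cfilter_eq {α : Type*} [Fintype α] (p : α → Prop) [DecidablePred p] :
    cfilter p = Finset.univ.filter p :=
  Finset.filter_congr_decidable _ _ _

/-- Classical indicator. -/
noncomputable def ind (p : Prop) : ℕ := if p then 1 else 0

lemma ind_congr {p q : Prop} (h : p ↔ q) : ind p = ind q := by
  unfold ind
  exact if_congr h rfl rfl

lemma card_cfilter_sum {α : Type*} [Fintype α] (p : α → Prop) :
    (cfilter p).card = ∑ a : α, ind (p a) := by
  unfold cfilter ind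
  rw [Finset.card_filter]

/-- Splitting a `cfilter` count over `Fin (t+1) → β` along the first coordinate. -/
lemma card_cfilter_cons {β : Type*} [Fintype β] (t : ℕ) (P : (Fin (t+1) → β) → Prop) :
    (cfilter P).card = ∑ g' : Fin t → β, (cfilter fun h : β => P (Fin.cons h g')).card := by
  rw [Finset.card_eq_sum_card_fiberwise
    (f := fun g : Fin (t+1) → β => Fin.tail g) (t := univ) (fun _ _ => mem_univ _)]
  refine Finset.sum_congr rfl fun g' _ => ?_
  refine Finset.card_nbij' (fun g => g 0) (fun h => Fin.cons h g') ?_ ?_ ?_ ?_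
  · intro g hg
    simp only [Finset.mem_coe, Finset.mem_filter, mem_cfilter] at hg ⊢
    rw [show Fin.cons (g 0) g' = g by rw [← hg.2]; exact Fin.cons_self_tail g]
    exact hg.1
  · intro h hh
    simp only [Finset.mem_coe, Finset.mem_filter, mem_cfilter] at hh ⊢
    exact ⟨hh, Fin.tail_cons _ _⟩
  · intro g hg
    simp only [Finset.mem_coe, Finset.mem_filter, mem_cfilter] at hg
    rw [← hg.2]
    exact Fin.cons_self_tail g
  · intro h hh
    exact Fin.cons_zero _ _

lemma card_cfilter_forall (m n : ℕ) (S : Finset (Fin n)) :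
    (cfilter fun h : Fin m → Fin n => ∀ j, h j ∈ S).card = S.card ^ m := by
  have h : (cfilter fun h : Fin m → Fin n => ∀ j, h j ∈ S)
      = Fintype.piFinset (fun _ : Fin m => S) := by
    ext h; rw [mem_cfilter, Fintype.mem_piFinset]
  rw [h, Fintype.card_piFinset]
  simp

/-- Number of `k`-blown-up "grids" all of whose transversals lie in `T`. -/
noncomputable def homC (k t n : ℕ) (T : Finset (Fin t → Fin n)) : ℕ :=
  (cfilter fun g : Fin t → Fin k → Fin n =>
    ∀ c : Fin t → Fin k, (fun i => g i (c i)) ∈ T).card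

lemma homC_bound (k : ℕ) (hk : 1 ≤ k) (n : ℕ) :
    ∀ (t : ℕ) (T : Finset (Fin t → Fin n)),
      T.card ^ (k ^ t) * n ^ (t * k) ≤ homC k t n T * n ^ (t * k ^ t) := by
  intro t
  induction t with
  | zero =>
    intro T
    simp only [pow_zero, Nat.zero_mul, pow_one, mul_one]
    rcases T.eq_empty_or_nonempty with rfl | ⟨f, hf⟩
    · simp
    have h1 : T.card ≤ 1 := by
      refine le_trans (Finset.card_le_univ T) ?_
      simp [Finset.card_univ]
    have h2 : 1 ≤ homC k 0 n T := by
      refine Finset.card_pos.mpr ⟨fun i => i.elim0, ?_⟩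
      rw [mem_cfilter]
      intro c
      have h3 : (fun i : Fin 0 => (Fin.elim0 (α := Fin k → Fin n) i) (c i)) = f :=
        funext fun i => i.elim0
      exact h3 ▸ hf
    omega
  | succ t ih =>
    intro T
    rcases Nat.eq_zero_or_pos n with rfl | hn
    · have hT : T = ∅ := Finset.eq_empty_of_forall_notMem fun f _ => (f 0).elim0
      subst hT
      simp [zero_pow (pow_pos hk (t+1)).ne']
    have hA : homC k (t+1) n T = ∑ g' : Fin t → Fin k → Fin n,
        (cfilter fun y : Fin n =>
          ∀ c' : Fin t → Fin k, Fin.cons y (fun i => g' i (c' i)) ∈ T).card ^ k := by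
      unfold homC
      refine (card_cfilter_cons t (fun g : Fin (t+1) → (Fin k → Fin n) =>
        ∀ c : Fin (t+1) → Fin k, (fun i => g i (c i)) ∈ T)).trans ?_
      refine Finset.sum_congr rfl fun g' _ => ?_
      have hfc : (cfilter fun h : Fin k → Fin n =>
            ∀ c : Fin (t+1) → Fin k,
              (fun i => (Fin.cons h g' : Fin (t+1) → Fin k → Fin n) i (c i)) ∈ T)
          = (cfilter fun h : Fin k → Fin n => ∀ j, h j ∈
              (cfilter fun y : Fin n =>
                ∀ c' : Fin t → Fin k, Fin.cons y (fun i => g' i (c' i)) ∈ T)) := by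
        refine cfilter_congr fun h => ?_
        constructor
        · intro hc j
          rw [mem_cfilter]
          intro c'
          have h1 := hc (Fin.cons j c')
          have he : (fun i => (Fin.cons h g' : Fin (t+1) → Fin k → Fin n) i
                ((Fin.cons j c' : Fin (t+1) → Fin k) i))
              = Fin.cons (h j) (fun i => g' i (c' i)) := by
            funext i
            refine Fin.cases ?_ ?_ i
            · simp
            · intro i'; simp
          rwa [he] at h1
        · intro hj c
          have he : (fun i => (Fin.cons h g' : Fin (t+1) → Fin k → Fin n) i (c i))
              = Fin.cons (h (c 0)) (fun i => g' i (Fin.tail c i)) := by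
            funext i
            refine Fin.cases ?_ ?_ i
            · simp
            · intro i'; simp [Fin.tail]
          rw [he]
          have h1 := hj (c 0)
          rw [mem_cfilter] at h1
          exact h1 _
      rw [hfc, card_cfilter_forall]
    have hB : ∑ g' : Fin t → Fin k → Fin n,
        (cfilter fun y : Fin n =>
          ∀ c' : Fin t → Fin k, Fin.cons y (fun i => g' i (c' i)) ∈ T).card
        = ∑ y : Fin n, homC k t n (cfilter fun x : Fin t → Fin n => Fin.cons y x ∈ T) := by
      calc ∑ g' : Fin t → Fin k → Fin n,
            (cfilter fun y : Fin n =>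
              ∀ c' : Fin t → Fin k, Fin.cons y (fun i => g' i (c' i)) ∈ T).card
          = ∑ g' : Fin t → Fin k → Fin n, ∑ y : Fin n,
              ind (∀ c' : Fin t → Fin k, Fin.cons y (fun i => g' i (c' i)) ∈ T) :=
            Finset.sum_congr rfl fun g' _ => card_cfilter_sum _
        _ = ∑ y : Fin n, ∑ g' : Fin t → Fin k → Fin n,
              ind (∀ c' : Fin t → Fin k, Fin.cons y (fun i => g' i (c' i)) ∈ T) :=
            Finset.sum_comm
        _ = ∑ y : Fin n, homC k t n (cfilter fun x : Fin t → Fin n => Fin.cons y x ∈ T) := by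
            refine Finset.sum_congr rfl fun y _ => ?_
            rw [homC, card_cfilter_sum]
            refine Finset.sum_congr rfl fun g' _ => ?_
            refine (ind_congr ?_).symm
            constructor
            · intro hc c'
              have := hc c'
              rwa [mem_cfilter] at this
            · intro hc c'
              rw [mem_cfilter]
              exact hc c'
    have hC : ∑ y : Fin n, (cfilter fun x : Fin t → Fin n => Fin.cons y x ∈ T).card
        = T.card := by
      have h1 : (cfilter fun g : Fin (t+1) → Fin n => g ∈ T).card
          = ∑ x : Fin t → Fin n, (cfilter fun y : Fin n => Fin.cons y x ∈ T).card :=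
        card_cfilter_cons t (fun g : Fin (t+1) → Fin n => g ∈ T)
      calc ∑ y : Fin n, (cfilter fun x : Fin t → Fin n => Fin.cons y x ∈ T).card
          = ∑ y : Fin n, ∑ x : Fin t → Fin n, ind (Fin.cons y x ∈ T) :=
            Finset.sum_congr rfl fun y _ => card_cfilter_sum _
        _ = ∑ x : Fin t → Fin n, ∑ y : Fin n, ind (Fin.cons y x ∈ T) :=
            Finset.sum_comm
        _ = ∑ x : Fin t → Fin n, (cfilter fun y : Fin n => Fin.cons y x ∈ T).card :=
            Finset.sum_congr rfl fun x _ => (card_cfilter_sum _).symm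
        _ = (cfilter fun g : Fin (t+1) → Fin n => g ∈ T).card := h1.symm
        _ = T.card := by rw [cfilter_eq, Finset.filter_univ_mem]
    set D : Fin n → ℕ := fun y => (cfilter fun x : Fin t → Fin n => Fin.cons y x ∈ T).card
      with hD
    set Hc : Fin n → ℕ :=
      fun y => homC k t n (cfilter fun x : Fin t → Fin n => Fin.cons y x ∈ T) with hHc
    have step2 : T.card ^ (k^t) * n ≤ n ^ (k^t) * ∑ y : Fin n, (D y) ^ (k^t) := by
      have h1 := natPM (univ : Finset (Fin n)) D (k^t)
      rw [Finset.card_univ, Fintype.card_fin, hC] at h1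
      exact h1
    have step3 : (∑ y : Fin n, (D y)^(k^t)) * n^(t*k) ≤ (∑ y : Fin n, Hc y) * n^(t*(k^t)) := by
      rw [Finset.sum_mul, Finset.sum_mul]
      exact Finset.sum_le_sum fun y _ => ih _
    have step5 : (∑ y : Fin n, Hc y) ^ k * n^(t*k) ≤ n^(t*k*k) * homC k (t+1) n T := by
      have h1 := natPM (univ : Finset (Fin t → Fin k → Fin n))
        (fun g' => (cfilter fun y : Fin n =>
          ∀ c' : Fin t → Fin k, Fin.cons y (fun i => g' i (c' i)) ∈ T).card) k
      rw [Finset.card_univ] at h1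
      have hcard : Fintype.card (Fin t → Fin k → Fin n) = n ^ (t*k) := by
        rw [Fintype.card_fun, Fintype.card_fun, Fintype.card_fin, Fintype.card_fin,
          Fintype.card_fin, ← pow_mul, mul_comm k t]
      rw [hcard, hB, ← hA] at h1
      calc (∑ y : Fin n, Hc y) ^ k * n^(t*k) ≤ (n^(t*k))^k * homC k (t+1) n T := h1
        _ = n^(t*k*k) * homC k (t+1) n T := by ring
    have ha : T.card ^ (k^t) * n ^ (1 + t*k) ≤ n ^ (k^t + t*(k^t)) * (∑ y : Fin n, Hc y) := by
      calc T.card ^ (k^t) * n ^ (1+t*k) = (T.card ^ (k^t) * n) * n^(t*k) := by ring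
        _ ≤ (n ^ (k^t) * ∑ y : Fin n, (D y)^(k^t)) * n^(t*k) := Nat.mul_le_mul_right _ step2
        _ = n^(k^t) * ((∑ y : Fin n, (D y)^(k^t)) * n^(t*k)) := by ring
        _ ≤ n^(k^t) * ((∑ y : Fin n, Hc y) * n^(t*(k^t))) := Nat.mul_le_mul_left _ step3
        _ = n^(k^t + t*(k^t)) * (∑ y : Fin n, Hc y) := by ring
    have hb : (T.card ^ (k^t)) ^ k * n ^ ((1+t*k)*k)
        ≤ n ^ ((k^t + t*(k^t))*k) * (∑ y : Fin n, Hc y)^k := by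
      calc (T.card ^ (k^t))^k * n^((1+t*k)*k) = (T.card ^ (k^t) * n^(1+t*k))^k := by ring
        _ ≤ (n^(k^t + t*(k^t)) * (∑ y : Fin n, Hc y))^k := Nat.pow_le_pow_left ha k
        _ = n^((k^t + t*(k^t))*k) * (∑ y : Fin n, Hc y)^k := by ring
    have key : T.card^(k^t*k) * n^((1+t*k)*k + t*k)
        ≤ n^((k^t + t*(k^t))*k + t*k*k) * homC k (t+1) n T := by
      calc T.card^(k^t*k) * n^((1+t*k)*k + t*k)
          = ((T.card^(k^t))^k * n^((1+t*k)*k)) * n^(t*k) := by ring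
        _ ≤ (n^((k^t + t*(k^t))*k) * (∑ y : Fin n, Hc y)^k) * n^(t*k) :=
            Nat.mul_le_mul_right _ hb
        _ = n^((k^t + t*(k^t))*k) * ((∑ y : Fin n, Hc y)^k * n^(t*k)) := by ring
        _ ≤ n^((k^t + t*(k^t))*k) * (n^(t*k*k) * homC k (t+1) n T) :=
            Nat.mul_le_mul_left _ step5
        _ = n^((k^t + t*(k^t))*k + t*k*k) * homC k (t+1) n T := by ring
    have hpos : 0 < n ^ (t*k*k) := pow_pos hn _
    have e1 : T.card ^ (k^(t+1)) * n^((t+1)*k) * n^(t*k*k)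
        = T.card^(k^t*k) * n^((1+t*k)*k + t*k) := by ring
    have e2 : homC k (t+1) n T * n^((t+1)*(k^(t+1))) * n^(t*k*k)
        = n^((k^t + t*(k^t))*k + t*k*k) * homC k (t+1) n T := by ring
    refine Nat.le_of_mul_le_mul_right ?_ hpos
    rw [e1, e2]
    exact key

lemma card_cfilter_eq_coord {β : Type*} [Fintype β] [DecidableEq β] (n : ℕ) {p q : β}
    (hpq : p ≠ q) :
    (cfilter fun u : β → Fin n => u p = u q).card * n ≤ n ^ Fintype.card β := by
  have h1 : (cfilter fun u : β → Fin n => u p = u q).card ≤ n ^ (Fintype.card β - 1) := by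
    have := Finset.card_le_card_of_injOn
      (f := fun (u : β → Fin n) (x : {x : β // x ≠ p}) => u x.1)
      (s := cfilter fun u : β → Fin n => u p = u q)
      (t := (univ : Finset ({x : β // x ≠ p} → Fin n)))
      (fun _ _ => mem_univ _) ?_
    · refine this.trans ?_
      rw [Finset.card_univ, Fintype.card_fun, Fintype.card_fin]
      have : Fintype.card {x : β // x ≠ p} = Fintype.card β - 1 := by
        have := Fintype.card_subtype_compl (fun x : β => x = p)
        rw [Fintype.card_subtype_eq] at this
        exact this
      rw [this]
    · intro u hu v hv huv
      simp only [Finset.coe_sort_coe, Finset.mem_coe, mem_cfilter] at hu hv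
      funext x
      by_cases hx : x = p
      · subst hx
        have hq := congrFun huv ⟨q, hpq.symm⟩
        simp only at hq
        rw [hu, hv]
        exact hq
      · exact congrFun huv ⟨x, hx⟩
  have hm : 1 ≤ Fintype.card β := Fintype.card_pos_iff.mpr ⟨p⟩
  calc (cfilter fun u : β → Fin n => u p = u q).card * n
      ≤ n ^ (Fintype.card β - 1) * n := Nat.mul_le_mul_right _ h1
    _ = n ^ (Fintype.card β - 1 + 1) := (pow_succ _ _).symm
    _ = n ^ Fintype.card β := by rw [Nat.sub_add_cancel hm]

lemma card_cfilter_noninj (β : Type*) [Fintype β] [DecidableEq β] (n : ℕ) :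
    (cfilter fun u : β → Fin n => ¬ Function.Injective u).card * n
      ≤ (Fintype.card β)^2 * n ^ Fintype.card β := by
  have hsub : (cfilter fun u : β → Fin n => ¬ Function.Injective u)
      ⊆ (univ.filter (fun pq : β × β => pq.1 ≠ pq.2)).biUnion
          (fun pq => cfilter fun u : β → Fin n => u pq.1 = u pq.2) := by
    intro u hu
    rw [mem_cfilter] at hu
    rw [Function.Injective] at hu
    push_neg at hu
    obtain ⟨a, b, hab, hne⟩ := hu
    refine Finset.mem_biUnion.mpr ⟨(a,b), ?_, ?_⟩
    · simp [hne]
    · rw [mem_cfilter]; exact hab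
  calc (cfilter fun u : β → Fin n => ¬ Function.Injective u).card * n
      ≤ (∑ pq ∈ univ.filter (fun pq : β × β => pq.1 ≠ pq.2),
          (cfilter fun u : β → Fin n => u pq.1 = u pq.2).card) * n :=
        Nat.mul_le_mul_right _ ((Finset.card_le_card hsub).trans (Finset.card_biUnion_le))
    _ = ∑ pq ∈ univ.filter (fun pq : β × β => pq.1 ≠ pq.2),
          (cfilter fun u : β → Fin n => u pq.1 = u pq.2).card * n := Finset.sum_mul _ _ _
    _ ≤ ∑ _pq ∈ univ.filter (fun pq : β × β => pq.1 ≠ pq.2), n ^ Fintype.card β :=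
        Finset.sum_le_sum fun pq hpq =>
          card_cfilter_eq_coord n (Finset.mem_filter.mp hpq).2
    _ = (univ.filter (fun pq : β × β => pq.1 ≠ pq.2)).card * n ^ Fintype.card β := by
        rw [Finset.sum_const, smul_eq_mul]
    _ ≤ (Fintype.card β)^2 * n ^ Fintype.card β := by
        refine Nat.mul_le_mul_right _ ?_
        calc (univ.filter (fun pq : β × β => pq.1 ≠ pq.2)).card
            ≤ (univ : Finset (β × β)).card := Finset.card_le_card (Finset.filter_subset _ _)
          _ = (Fintype.card β)^2 := by
              rw [Finset.card_univ, Fintype.card_prod]; ring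

lemma card_noninj_grid (k t n : ℕ) :
    (cfilter fun g : Fin t → Fin k → Fin n =>
      ¬ Function.Injective fun pr : Fin t × Fin k => g pr.1 pr.2).card
    = (cfilter fun u : Fin t × Fin k → Fin n => ¬ Function.Injective u).card := by
  refine Finset.card_nbij' (fun g => fun pr : Fin t × Fin k => g pr.1 pr.2)
    (fun u => fun a b => u (a, b)) ?_ ?_ ?_ ?_
  · intro g hg
    rw [Finset.mem_coe, mem_cfilter] at hg ⊢
    exact hg
  · intro u hu
    rw [Finset.mem_coe, mem_cfilter] at hu ⊢
    have he : (fun pr : Fin t × Fin k => u (pr.1, pr.2)) = u := by funext pr; rfl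
    rw [he]
    exact hu
  · intro g hg; rfl
  · intro u hu; rfl

/-- An ordered-tuple variant of a theorem of Erdős and Simonovits: for all
`k, t ≥ 1` and `0 < γ ≤ 1` there is `γ' > 0` such that for all large `n`, if
`T` is a family of ordered `t`-tuples of distinct elements of `{1,…,n}` with
`|T| > γ·n^t`, then `t` independent uniformly random `k`-subsets
`A₁, …, A_t` of `{1,…,n}` are, with probability at least `γ'`, pairwise
disjoint and `T`-complete (every choice of `vᵢ ∈ Aᵢ` gives a tuple in `T`). -/
theorem erdos_simonovits_ordered (k t : ℕ) (hk : 1 ≤ k) (ht : 1 ≤ t)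
    (γ : ℝ) (hγ0 : 0 < γ) (hγ1 : γ ≤ 1) :
    ∃ γ' : ℝ, 0 < γ' ∧ ∃ n₀ : ℕ, ∀ n ≥ n₀, ∀ T : Finset (Fin t → Fin n),
      (∀ f ∈ T, Function.Injective f) → γ * (n : ℝ) ^ t < T.card →
      γ' ≤ ((Finset.univ.filter (fun A : Fin t → Finset (Fin n) =>
          (∀ i, (A i).card = k) ∧
          (∀ i j, i ≠ j → Disjoint (A i) (A j)) ∧
          (∀ v : Fin t → Fin n, (∀ i, v i ∈ A i) → v ∈ T))).card : ℝ) /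
        ((n.choose k : ℝ)) ^ t := by
  have hC0 : (0:ℝ) < γ ^ (k ^ t) := pow_pos hγ0 _
  set C : ℝ := γ ^ (k ^ t) with hCdef
  have hkR : (0:ℝ) < (k:ℝ) := by exact_mod_cast hk
  refine ⟨C / (2 * (k:ℝ)^(t*k)), by positivity, k + 1 + ⌈(2 * ((t*k : ℕ):ℝ)^2) / C⌉₊, ?_⟩
  intro n hn T hTinj hTcard
  have hkn : k + 1 ≤ n := le_trans (Nat.le_add_right _ _) hn
  have hn1 : 1 ≤ n := by omega
  have hnpos : (0:ℝ) < (n:ℝ) := by exact_mod_cast Nat.lt_of_lt_of_le (by omega) hn1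
  have hnR : (2 * ((t*k : ℕ):ℝ)^2) / C ≤ (n:ℝ) := by
    calc (2 * ((t*k : ℕ):ℝ)^2) / C ≤ (⌈(2 * ((t*k : ℕ):ℝ)^2) / C⌉₊ : ℝ) := Nat.le_ceil _
      _ ≤ (n:ℝ) := by
          have h1 : ⌈(2 * ((t*k : ℕ):ℝ)^2) / C⌉₊ ≤ n := le_trans (Nat.le_add_left _ _) hn
          exact_mod_cast h1
  -- Step 1 : lower bound on homC
  have step1 : C * (n:ℝ)^(t*k) ≤ (homC k t n T : ℝ) := by
    have h0 := homC_bound k hk n t T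
    have h0R : ((T.card:ℝ))^(k^t) * (n:ℝ)^(t*k) ≤ (homC k t n T : ℝ) * (n:ℝ)^(t*(k^t)) := by
      exact_mod_cast h0
    have h2 : (γ * (n:ℝ)^t)^(k^t) ≤ (T.card:ℝ)^(k^t) :=
      pow_le_pow_left₀ (by positivity) hTcard.le _
    have h3 : (γ * (n:ℝ)^t)^(k^t) = C * (n:ℝ)^(t*(k^t)) := by
      rw [mul_pow, ← pow_mul]
    have h4 : C * (n:ℝ)^(t*(k^t)) * (n:ℝ)^(t*k) ≤ (homC k t n T : ℝ) * (n:ℝ)^(t*(k^t)) := by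
      calc C * (n:ℝ)^(t*(k^t)) * (n:ℝ)^(t*k)
          ≤ (T.card:ℝ)^(k^t) * (n:ℝ)^(t*k) := by
            refine mul_le_mul_of_nonneg_right ?_ (by positivity)
            rw [← h3]; exact h2
        _ ≤ (homC k t n T : ℝ) * (n:ℝ)^(t*(k^t)) := h0R
    have h5 : C * (n:ℝ)^(t*k) * (n:ℝ)^(t*(k^t)) ≤ (homC k t n T : ℝ) * (n:ℝ)^(t*(k^t)) := by
      calc C * (n:ℝ)^(t*k) * (n:ℝ)^(t*(k^t)) = C * (n:ℝ)^(t*(k^t)) * (n:ℝ)^(t*k) := by ring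
        _ ≤ _ := h4
    exact le_of_mul_le_mul_right h5 (by positivity)
  -- bad grids
  have hbadR : ((cfilter fun g : Fin t → Fin k → Fin n =>
      ¬ Function.Injective fun pr : Fin t × Fin k => g pr.1 pr.2).card : ℝ) * (n:ℝ)
      ≤ ((t*k : ℕ):ℝ)^2 * (n:ℝ)^(t*k) := by
    have h1 := card_cfilter_noninj (Fin t × Fin k) n
    have h2 : Fintype.card (Fin t × Fin k) = t*k := by simp
    rw [h2] at h1
    rw [card_noninj_grid] at *
    exact_mod_cast h1
  -- split
  have step3 : homC k t n T ≤ (cfilter fun g : Fin t → Fin k → Fin n =>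
        (∀ c : Fin t → Fin k, (fun i => g i (c i)) ∈ T) ∧
          Function.Injective fun pr : Fin t × Fin k => g pr.1 pr.2).card
      + (cfilter fun g : Fin t → Fin k → Fin n =>
          ¬ Function.Injective fun pr : Fin t × Fin k => g pr.1 pr.2).card := by
    have hsplit := Finset.card_filter_add_card_filter_not
      (s := cfilter fun g : Fin t → Fin k → Fin n =>
        ∀ c : Fin t → Fin k, (fun i => g i (c i)) ∈ T)
      (p := fun g => Function.Injective fun pr : Fin t × Fin k => g pr.1 pr.2)
    have h1 : (cfilter fun g : Fin t → Fin k → Fin n =>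
          ∀ c : Fin t → Fin k, (fun i => g i (c i)) ∈ T).filter
          (fun g => Function.Injective fun pr : Fin t × Fin k => g pr.1 pr.2)
        = cfilter fun g : Fin t → Fin k → Fin n =>
            (∀ c : Fin t → Fin k, (fun i => g i (c i)) ∈ T) ∧
              Function.Injective fun pr : Fin t × Fin k => g pr.1 pr.2 := by
      ext g
      simp only [Finset.mem_filter, mem_cfilter]
    have h2 : (cfilter fun g : Fin t → Fin k → Fin n =>
          ∀ c : Fin t → Fin k, (fun i => g i (c i)) ∈ T).filter
          (fun g => ¬ Function.Injective fun pr : Fin t × Fin k => g pr.1 pr.2)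
        ⊆ cfilter fun g : Fin t → Fin k → Fin n =>
            ¬ Function.Injective fun pr : Fin t × Fin k => g pr.1 pr.2 := by
      intro g hg
      rw [mem_cfilter]
      exact (Finset.mem_filter.mp hg).2
    calc homC k t n T
        = (cfilter fun g : Fin t → Fin k → Fin n =>
            ∀ c : Fin t → Fin k, (fun i => g i (c i)) ∈ T).card := rfl
      _ = _ + _ := hsplit.symm
      _ ≤ _ := by
          rw [h1]
          exact Nat.add_le_add_left (Finset.card_le_card h2) _
  -- Step 4 : lower bound on good injective grids
  have step4 : C/2 * (n:ℝ)^(t*k) ≤ ((cfilter fun g : Fin t → Fin k → Fin n =>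
      (∀ c : Fin t → Fin k, (fun i => g i (c i)) ∈ T) ∧
        Function.Injective fun pr : Fin t × Fin k => g pr.1 pr.2).card : ℝ) := by
    have hb1 : ((cfilter fun g : Fin t → Fin k → Fin n =>
        ¬ Function.Injective fun pr : Fin t × Fin k => g pr.1 pr.2).card : ℝ)
        ≤ C/2 * (n:ℝ)^(t*k) := by
      have h1 : ((t*k:ℕ):ℝ)^2 ≤ C/2 * n := by
        rw [div_le_iff₀ hC0] at hnR
        nlinarith [hnR]
      have h2 : ((cfilter fun g : Fin t → Fin k → Fin n =>
          ¬ Function.Injective fun pr : Fin t × Fin k => g pr.1 pr.2).card : ℝ) * n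
          ≤ (C/2 * (n:ℝ)^(t*k)) * n := by
        calc _ ≤ ((t*k:ℕ):ℝ)^2 * (n:ℝ)^(t*k) := hbadR
          _ ≤ (C/2 * n) * (n:ℝ)^(t*k) := mul_le_mul_of_nonneg_right h1 (by positivity)
          _ = (C/2 * (n:ℝ)^(t*k)) * n := by ring
      exact le_of_mul_le_mul_right h2 hnpos
    have hs3 : (homC k t n T : ℝ)
        ≤ ((cfilter fun g : Fin t → Fin k → Fin n =>
            (∀ c : Fin t → Fin k, (fun i => g i (c i)) ∈ T) ∧
              Function.Injective fun pr : Fin t × Fin k => g pr.1 pr.2).card : ℝ)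
          + ((cfilter fun g : Fin t → Fin k → Fin n =>
              ¬ Function.Injective fun pr : Fin t × Fin k => g pr.1 pr.2).card : ℝ) := by
      exact_mod_cast step3
    linarith [step1]
  -- Step 5 : from grids to tuples of sets
  set F := Finset.univ.filter (fun A : Fin t → Finset (Fin n) =>
      (∀ i, (A i).card = k) ∧
      (∀ i j, i ≠ j → Disjoint (A i) (A j)) ∧
      (∀ v : Fin t → Fin n, (∀ i, v i ∈ A i) → v ∈ T)) with hF
  have step5 : (cfilter fun g : Fin t → Fin k → Fin n =>
      (∀ c : Fin t → Fin k, (fun i => g i (c i)) ∈ T) ∧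
        Function.Injective fun pr : Fin t × Fin k => g pr.1 pr.2).card
      ≤ k^(t*k) * F.card := by
    refine Finset.card_le_mul_card_image_of_maps_to
      (f := fun g (i : Fin t) => Finset.image (g i) Finset.univ) ?_ _ ?_
    · intro g hg
      rw [mem_cfilter] at hg
      obtain ⟨hP, hI⟩ := hg
      have hrow : ∀ i, Function.Injective (g i) := by
        intro i a b hab
        have h2 : ((i,a) : Fin t × Fin k) = (i,b) := hI hab
        exact ((Prod.mk.injEq _ _ _ _).mp h2).2
      rw [hF, Finset.mem_filter]
      refine ⟨Finset.mem_univ _, ?_, ?_, ?_⟩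
      · intro i
        rw [Finset.card_image_of_injective _ (hrow i), Finset.card_univ, Fintype.card_fin]
      · intro i j hij
        rw [Finset.disjoint_left]
        intro x hxi hxj
        obtain ⟨a, _, ha⟩ := Finset.mem_image.mp hxi
        obtain ⟨b, _, hb⟩ := Finset.mem_image.mp hxj
        have h3 : ((i,a) : Fin t × Fin k) = (j,b) := hI (show g i a = g j b from ha.trans hb.symm)
        exact hij ((Prod.mk.injEq _ _ _ _).mp h3).1
      · intro v hv
        choose c hc1 hc2 using fun i => Finset.mem_image.mp (hv i)
        have h4 := hP c
        rwa [show (fun i => g i (c i)) = v from funext fun i => hc2 i] at h4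
    · intro A hA
      have hAcard : ∀ i, (A i).card = k := by
        rw [hF, Finset.mem_filter] at hA
        exact hA.2.1
      have hsub : ((cfilter fun g : Fin t → Fin k → Fin n =>
            (∀ c : Fin t → Fin k, (fun i => g i (c i)) ∈ T) ∧
              Function.Injective fun pr : Fin t × Fin k => g pr.1 pr.2).filter
            (fun g => (fun i => Finset.image (g i) Finset.univ) = A))
          ⊆ Fintype.piFinset (fun i : Fin t => Fintype.piFinset (fun _ : Fin k => A i)) := by
        intro g hg
        obtain ⟨hgG, hgA⟩ := Finset.mem_filter.mp hg
        rw [Fintype.mem_piFinset]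
        intro i
        rw [Fintype.mem_piFinset]
        intro j
        have h5 : Finset.image (g i) Finset.univ = A i := congrFun hgA i
        rw [← h5]
        exact Finset.mem_image_of_mem _ (Finset.mem_univ j)
      calc ((cfilter fun g : Fin t → Fin k → Fin n =>
            (∀ c : Fin t → Fin k, (fun i => g i (c i)) ∈ T) ∧
              Function.Injective fun pr : Fin t × Fin k => g pr.1 pr.2).filter
            (fun g => (fun i => Finset.image (g i) Finset.univ) = A)).card
          ≤ (Fintype.piFinset (fun i : Fin t => Fintype.piFinset (fun _ : Fin k => A i))).card :=
            Finset.card_le_card hsub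
        _ = ∏ i : Fin t, (Fintype.piFinset fun _ : Fin k => A i).card :=
            Fintype.card_piFinset _
        _ = ∏ i : Fin t, ∏ _j : Fin k, (A i).card :=
            Finset.prod_congr rfl fun i _ => Fintype.card_piFinset _
        _ = ∏ i : Fin t, k ^ k := by
            refine Finset.prod_congr rfl fun i _ => ?_
            rw [Finset.prod_const, hAcard i, Finset.card_univ, Fintype.card_fin]
        _ = (k ^ k) ^ t := by rw [Finset.prod_const, Finset.card_univ, Fintype.card_fin]
        _ = k ^ (t*k) := by rw [← pow_mul, mul_comm]
  -- conclusion
  have hchpos : (0:ℝ) < (n.choose k : ℝ) := by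
    exact_mod_cast Nat.choose_pos ((Nat.le_succ k).trans hkn)
  rw [le_div_iff₀ (by positivity : (0:ℝ) < ((n.choose k : ℝ))^t)]
  have hstep45 : C/2 * (n:ℝ)^(t*k) ≤ (k:ℝ)^(t*k) * (F.card:ℝ) := by
    refine step4.trans ?_
    have h6 : ((cfilter fun g : Fin t → Fin k → Fin n =>
        (∀ c : Fin t → Fin k, (fun i => g i (c i)) ∈ T) ∧
          Function.Injective fun pr : Fin t × Fin k => g pr.1 pr.2).card : ℝ)
        ≤ ((k^(t*k) * F.card : ℕ) : ℝ) := by exact_mod_cast step5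
    refine h6.trans ?_
    push_cast
    exact le_rfl
  have hchle : ((n.choose k : ℝ))^t ≤ (n:ℝ)^(t*k) := by
    have h1 : ((n.choose k : ℝ)) ≤ (n:ℝ)^k := by exact_mod_cast Nat.choose_le_pow n k
    calc ((n.choose k : ℝ))^t ≤ ((n:ℝ)^k)^t := pow_le_pow_left₀ (by positivity) h1 t
      _ = (n:ℝ)^(k*t) := (pow_mul _ _ _).symm
      _ = (n:ℝ)^(t*k) := by rw [mul_comm]
  calc C / (2*(k:ℝ)^(t*k)) * ((n.choose k : ℝ))^t
      ≤ C / (2*(k:ℝ)^(t*k)) * (n:ℝ)^(t*k) :=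
        mul_le_mul_of_nonneg_left hchle (by positivity)
    _ = (C/2 * (n:ℝ)^(t*k)) / (k:ℝ)^(t*k) := by ring
    _ ≤ ((k:ℝ)^(t*k) * (F.card:ℝ)) / (k:ℝ)^(t*k) := by
        gcongr
    _ = (F.card:ℝ) := by field_simp
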